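/- Let u, v, x, y form a Tie(u; v, x, y) with max(d(u,v), d(x,y)) ≤ 1. Then d(u,x) ≤ √2 and d(u,y) ≤ √2. -/

import Mathlib

open EuclideanGeometry Real

abbrev Pt := EuclideanSpace ℝ (Fin 2)

/-- Two segments cross: they meet at a point interior to both. -/
def Crosses (a b c d : Pt) : Prop :=
  ∃ p : Pt, p ∈ openSegment ℝ a b ∧ p ∈ openSegment ℝ c d

/-- Tie(a; b, c, d). -/
def Tie (a b c d : Pt) : Prop :=
  Crosses a b c d ∧ dist a c > dist a b ∧ dist a d > dist a b ∧ dist a c > dist c d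

set_option maxHeartbeats 1000000 in
theorem stmt4 (u v x y : Pt) (htie : Tie u v x y)
    (hmax : max (dist u v) (dist x y) ≤ 1) :
    dist u x ≤ Real.sqrt 2 ∧ dist u y ≤ Real.sqrt 2 := by
  obtain ⟨⟨p, hp1, hp2⟩, hux, huy, -⟩ := htie
  rw [openSegment_eq_image] at hp1 hp2
  obtain ⟨s, hs, hps⟩ := hp1
  obtain ⟨t, ht, hpt⟩ := hp2
  simp only [Set.mem_Ioo] at hs ht
  have hmax1 : dist u v ≤ 1 := le_trans (le_max_left _ _) hmax
  have hmax2 : dist x y ≤ 1 := le_trans (le_max_right _ _) hmax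
  have hup : u - p = s • (u - v) := by rw [← hps]; module
  have hxp : x - p = t • (x - y) := by rw [← hpt]; module
  have hyp : y - p = (t - 1) • (x - y) := by rw [← hpt]; module
  set a := ‖u - p‖ with ha
  set W := ‖x - y‖ with hW
  set e := (inner ℝ (u - p) (x - y) : ℝ) with he
  have hWd : W = dist x y := (dist_eq_norm x y).symm
  have hWnn : 0 ≤ W := norm_nonneg _
  have hann : 0 ≤ a := norm_nonneg _
  have haduv : a ≤ dist u v := by
    rw [ha, hup, norm_smul, Real.norm_eq_abs, abs_of_pos hs.1, dist_eq_norm]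
    nlinarith [norm_nonneg (u - v), hs.2]
  have ha1 : a ≤ 1 := le_trans haduv hmax1
  have hW1 : W ≤ 1 := by rw [hWd]; exact hmax2
  -- expand dist u x
  have hxeq : u - x = (u - p) - t • (x - y) := by rw [← hxp]; module
  have hyeq : u - y = (u - p) + (1 - t) • (x - y) := by
    have : u - y = (u - p) - (y - p) := by module
    rw [this, hyp]; module
  have h1 : dist u x ^ 2 = a ^ 2 - 2 * t * e + t ^ 2 * W ^ 2 := by
    rw [dist_eq_norm, hxeq, norm_sub_sq_real, real_inner_smul_right, norm_smul,
      Real.norm_eq_abs, abs_of_pos ht.1]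
    ring
  have h2 : dist u y ^ 2 = a ^ 2 + 2 * (1 - t) * e + (1 - t) ^ 2 * W ^ 2 := by
    rw [dist_eq_norm, hyeq, norm_add_sq_real, real_inner_smul_right, norm_smul,
      Real.norm_eq_abs, abs_of_pos (by linarith [ht.2] : (0:ℝ) < 1 - t)]
    ring
  -- key: dist u x > dist u v ≥ a, similarly dist u y
  have h3 : a ^ 2 < dist u x ^ 2 := by
    have h := lt_of_le_of_lt haduv hux
    exact pow_lt_pow_left₀ h hann two_ne_zero
  have h4 : a ^ 2 < dist u y ^ 2 := by
    have h := lt_of_le_of_lt haduv huy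
    exact pow_lt_pow_left₀ h hann two_ne_zero
  have h1t : (0:ℝ) < 1 - t := by linarith [ht.2]
  obtain ⟨ht0, ht1⟩ := ht
  clear_value a W e
  clear hup hxp hyp hxeq hyeq hps hpt hs ha hW he hmax hmax1 hmax2 haduv hux huy hWd
  have ha2 : a ^ 2 ≤ 1 := by nlinarith
  have hW2 : W ^ 2 ≤ 1 := by nlinarith
  have htW : t * W ^ 2 ≤ 1 := by nlinarith [sq_nonneg W]
  have htW' : (1 - t) * W ^ 2 ≤ 1 := by nlinarith [sq_nonneg W]
  constructor
  · have hh : 0 < (1 - t) * ((1 - t) * W ^ 2 + 2 * e) := by nlinarith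
    have hposx : 0 < (1 - t) * W ^ 2 + 2 * e := by
      rcases mul_pos_iff.mp hh with ⟨-, h⟩ | ⟨h', -⟩
      · exact h
      · linarith
    have hlt : dist u x ^ 2 ≤ 2 := by nlinarith [mul_pos ht0 hposx]
    rw [← Real.sqrt_sq dist_nonneg]
    exact Real.sqrt_le_sqrt (by linarith)
  · have hh : 0 < t * (t * W ^ 2 - 2 * e) := by nlinarith
    have hposy : 0 < t * W ^ 2 - 2 * e := by
      rcases mul_pos_iff.mp hh with ⟨-, h⟩ | ⟨h', -⟩
      · exact h
      · linarith
    have hlt : dist u y ^ 2 ≤ 2 := by nlinarith [mul_pos h1t hposy]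
    rw [← Real.sqrt_sq dist_nonneg]
    exact Real.sqrt_le_sqrt (by linarith)
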